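/- For every integer n ≥ 1, the denominator DB_n of the n-th Bernoulli polynomial B_n(x) splits into the triple product DB_n = D̂_{n+1} · D̃_{n+1} · Ď_{n+1}. -/

import Mathlib

/-- A rational polynomial has only integral coefficients. -/
def IsIntPoly (f : Polynomial ℚ) : Prop := ∀ i, (f.coeff i).den = 1

/-- The least positive integer `d` such that `d • f` has only integral coefficients. -/
noncomputable def polyDenom (f : Polynomial ℚ) : ℕ :=
  sInf {d : ℕ | 0 < d ∧ IsIntPoly ((d : ℚ) • f)}

/-- Sum of base-`p` digits of `n`. -/
def sd (p n : ℕ) : ℕ := (Nat.digits p n).sum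

/-- Radical (squarefree kernel) of `n`. -/
def rad (n : ℕ) : ℕ := ∏ p ∈ n.primeFactors, p

/-- `D n = denom (B_n(x) - B_n)`. -/
noncomputable def D (n : ℕ) : ℕ :=
  polyDenom (Polynomial.bernoulli n - Polynomial.C (bernoulli n))

/-- `DB n = denom (B_n(x))`. -/
noncomputable def DB (n : ℕ) : ℕ := polyDenom (Polynomial.bernoulli n)

/-- `D̂ n`: product of primes `p` with `p ∤ n` and `s_p(n) ≥ p`.
(Any such prime satisfies `p ≤ s_p(n) ≤ n`.) -/
def Dhat (n : ℕ) : ℕ :=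
  ∏ p ∈ (Finset.range (n + 1)).filter (fun p => p.Prime ∧ ¬ p ∣ n ∧ p ≤ sd p n), p

/-- `D̃ n`: product of primes `p` with `p ∣ n` and `s_p(n) ≥ p`. -/
def Dtilde (n : ℕ) : ℕ :=
  ∏ p ∈ (Finset.range (n + 1)).filter (fun p => p.Prime ∧ p ∣ n ∧ p ≤ sd p n), p

/-- `Ď n`: product of primes `p` with `p ∣ n` and `s_p(n) < p`. -/
def Dcheck (n : ℕ) : ℕ :=
  ∏ p ∈ (Finset.range (n + 1)).filter (fun p => p.Prime ∧ p ∣ n ∧ sd p n < p), p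

/-- `D⁺ n`: product of primes `p` with `p > √n` and `s_p(n) ≥ p`. -/
def Dplus (n : ℕ) : ℕ :=
  ∏ p ∈ (Finset.range (n + 1)).filter (fun p => p.Prime ∧ n < p ^ 2 ∧ p ≤ sd p n), p

/-- The sum-of-powers polynomial `S_n(x) = (B_{n+1}(x) - B_{n+1}) / (n+1)`. -/
noncomputable def Spoly (n : ℕ) : Polynomial ℚ :=
  Polynomial.C (((n : ℚ) + 1)⁻¹) *
    (Polynomial.bernoulli (n + 1) - Polynomial.C (bernoulli (n + 1)))

namespace KS
open Finset








lemma den_mul_nat_eq_one_iff (d : ℕ) (q : ℚ) : ((d:ℚ) * q).den = 1 ↔ q.den ∣ d := by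
  constructor
  · intro h
    have h2 : ((((d:ℚ)*q).num : ℤ) : ℚ) = (d:ℚ) * q := (Rat.den_eq_one_iff _).mp h
    have h3 : ((d : ℤ) * q.num : ℚ) = ((((d:ℚ)*q).num * q.den : ℤ) : ℚ) := by
      push_cast
      linear_combination (-(d:ℚ)) * (Rat.mul_den_eq_num q) - (q.den : ℚ) * h2
    have h4 : (d : ℤ) * q.num = ((d:ℚ)*q).num * q.den := by exact_mod_cast h3
    have h5 : (q.den : ℤ) ∣ (d:ℤ) * q.num := Dvd.intro _ (by linarith [h4])
    have h6 : q.den ∣ d * q.num.natAbs := by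
      have := Int.natAbs_dvd_natAbs.mpr h5
      simpa [Int.natAbs_mul] using this
    exact (Nat.Coprime.dvd_of_dvd_mul_right (q.reduced.symm) h6)
  · rintro ⟨e, rfl⟩
    have : ((q.den * e : ℕ) : ℚ) * q = (((e : ℤ) * q.num : ℤ) : ℚ) := by
      push_cast
      linear_combination (e:ℚ) * (Rat.mul_den_eq_num q)
    rw [this, Rat.den_intCast]

lemma isIntPoly_smul_iff (d : ℕ) (f : Polynomial ℚ) :
    IsIntPoly ((d : ℚ) • f) ↔ ∀ i, (f.coeff i).den ∣ d := by
  unfold IsIntPoly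
  refine forall_congr' fun i => ?_
  rw [Polynomial.coeff_smul, smul_eq_mul, den_mul_nat_eq_one_iff]

lemma polyDenom_eq_lcm (f : Polynomial ℚ) (s : Finset ℕ) (hs : f.support ⊆ s) :
    polyDenom f = s.lcm (fun i => (f.coeff i).den) := by
  set L := s.lcm (fun i => (f.coeff i).den) with hL
  have hL0 : L ≠ 0 := by
    intro h
    rw [hL, Finset.lcm_eq_zero_iff] at h
    obtain ⟨i, _, hi⟩ := h
    exact (Rat.den_nz _) hi
  have hset : {d : ℕ | 0 < d ∧ IsIntPoly ((d:ℚ) • f)} = {d | 0 < d ∧ L ∣ d} := by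
    ext d
    simp only [Set.mem_setOf_eq, isIntPoly_smul_iff]
    refine and_congr_right fun _ => ⟨fun h => Finset.lcm_dvd fun i _ => h i, fun h i => ?_⟩
    by_cases hi : i ∈ s
    · exact (Finset.dvd_lcm hi).trans h
    · have hz : f.coeff i = 0 := Polynomial.notMem_support_iff.mp fun hc => hi (hs hc)
      simp [hz]
  have hmem : L ∈ {d : ℕ | 0 < d ∧ L ∣ d} := ⟨Nat.pos_of_ne_zero hL0, dvd_rfl⟩
  unfold polyDenom
  rw [hset]
  refine le_antisymm (Nat.sInf_le hmem) ?_
  obtain ⟨h1, h2⟩ := Nat.sInf_mem (⟨L, hmem⟩ : Set.Nonempty _)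
  exact Nat.le_of_dvd h1 h2

lemma bernoulli_coeff (n k : ℕ) :
    (Polynomial.bernoulli n).coeff k =
      if k ≤ n then bernoulli (n - k) * (n.choose k : ℚ) else 0 := by
  rw [Polynomial.bernoulli_def, Polynomial.finset_sum_coeff]
  simp only [Polynomial.coeff_monomial]
  rw [Finset.sum_ite_eq' (range (n+1)) k (fun i => bernoulli (n - i) * (n.choose i : ℚ))]
  simp [Nat.lt_succ_iff]

lemma bernoulli_support (n : ℕ) : (Polynomial.bernoulli n).support ⊆ range (n + 1) := by
  intro k hk
  rw [Polynomial.mem_support_iff] at hk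
  rw [mem_range, Nat.lt_succ_iff]
  by_contra h
  rw [bernoulli_coeff, if_neg h] at hk
  exact hk rfl








lemma sd_rec {p : ℕ} (hp : 2 ≤ p) {n : ℕ} (hn : 0 < n) :
    sd p n = n % p + sd p (n / p) := by
  unfold sd
  rw [Nat.digits_def' hp hn, List.sum_cons]

lemma sd_le (p n : ℕ) : sd p n ≤ n := Nat.digit_sum_le p n

lemma sd_zero (p : ℕ) : sd p 0 = 0 := by simp [sd]

/-- `sd p (p*m+c) = sd p m + c` for `c < p`. -/
lemma sd_mul_add {p : ℕ} (hp : 2 ≤ p) (m c : ℕ) (hc : c < p) :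
    sd p (p * m + c) = sd p m + c := by
  rcases Nat.eq_zero_or_pos (p * m + c) with h | h
  · have hm : m = 0 := by
      rcases Nat.eq_zero_or_pos m with rfl | hm'
      · rfl
      · exfalso; have : 0 < p * m := Nat.mul_pos (by omega) hm'; omega
    subst hm
    simp only [Nat.mul_zero, Nat.zero_add] at h ⊢
    have : c = 0 := by omega
    simp [this, sd_zero]
  · rw [sd_rec hp h, Nat.mul_add_mod, Nat.mod_eq_of_lt hc,
      Nat.mul_add_div (by omega : 0 < p), Nat.div_eq_of_lt hc, Nat.add_zero]
    omega

lemma sd_single {p : ℕ} (hp : 2 ≤ p) (c : ℕ) (hc : c < p) : sd p c = c := by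
  have := sd_mul_add hp 0 c hc
  simpa [sd_zero] using this

lemma sd_eq_zero_iff {p : ℕ} (hp : 2 ≤ p) (n : ℕ) : sd p n = 0 ↔ n = 0 := by
  constructor
  · intro h
    induction n using Nat.strong_induction_on with
    | _ n ih =>
      by_contra hn
      have hn' : 0 < n := Nat.pos_of_ne_zero hn
      rw [sd_rec hp hn'] at h
      have h1 : n % p = 0 := by omega
      have h2 : sd p (n / p) = 0 := by omega
      have hdp : n / p < n := Nat.div_lt_self hn' (by omega)
      have h3 : n / p = 0 := by
        by_contra hq
        exact hq (ih (n / p) hdp h2)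
      have := Nat.div_add_mod n p
      rw [h3, h1] at this
      omega
  · rintro rfl; exact sd_zero p

lemma sd_mod {p : ℕ} (hp : 2 ≤ p) (n : ℕ) : n ≡ sd p n [MOD p - 1] := by
  rcases Nat.lt_or_ge p 3 with h | h
  · have hp2 : p = 2 := by omega
    subst hp2
    simp [Nat.ModEq, Nat.mod_one]
  · refine Nat.modEq_digits_sum (p - 1) p ?_ n
    rw [Nat.mod_eq_sub_mod (by omega)]
    have h1 : p - (p - 1) = 1 := by omega
    rw [h1]
    exact Nat.mod_eq_of_lt (by omega)

lemma sd_succ_of_not_dvd {p : ℕ} (hp : 2 ≤ p) {n : ℕ} (h : ¬ p ∣ (n + 1)) :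
    sd p (n + 1) = sd p n + 1 := by
  have hdm := Nat.div_add_mod n p
  have hlt : n % p < p := Nat.mod_lt n (by omega)
  have h2 : n % p + 1 < p := by
    rcases Nat.lt_or_ge (n % p + 1) p with h' | h'
    · exact h'
    · exfalso
      have he : n % p + 1 = p := by omega
      refine h ⟨n / p + 1, ?_⟩
      calc n + 1 = p * (n / p) + (n % p + 1) := by omega
        _ = p * (n / p) + p := by rw [he]
        _ = p * (n / p + 1) := by ring
  have hn1 : n + 1 = p * (n / p) + (n % p + 1) := by omega
  rw [hn1, sd_mul_add hp _ _ h2]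
  rcases Nat.eq_zero_or_pos n with rfl | hn
  · simp [sd_zero]
  · rw [sd_rec hp hn]
    omega

lemma sd_p_mul {p : ℕ} (hp : 2 ≤ p) (m : ℕ) : sd p (p * m) = sd p m := by
  have := sd_mul_add hp m 0 (by omega)
  simpa using this

lemma choose_not_dvd_iff {p : ℕ} (hp : p.Prime) {i n : ℕ} (h : i ≤ n) :
    ¬ p ∣ n.choose i ↔ sd p i + sd p (n - i) ≤ sd p n := by
  haveI : Fact p.Prime := ⟨hp⟩
  have hp2 := hp.two_le
  have hK := sub_one_mul_padicValNat_choose_eq_sub_sum_digits (p := p) h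
  have hpos : 0 < n.choose i := Nat.choose_pos h
  have hv : ¬ p ∣ n.choose i ↔ padicValNat p (n.choose i) = 0 := by
    rw [padicValNat.eq_zero_iff]
    constructor
    · intro hnd; right; right; exact hnd
    · rintro (h1 | h2 | h3)
      · exact absurd h1 hp.ne_one
      · omega
      · exact h3
  rw [hv]
  constructor
  · intro h0
    rw [h0, Nat.mul_zero] at hK
    unfold sd
    omega
  · intro hle
    have hz : (p - 1) * padicValNat p (n.choose i) = 0 := by
      rw [hK]; unfold sd at hle; omega
    rcases Nat.mul_eq_zero.mp hz with h1 | h2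
    · omega
    · exact h2

/-- Digit-selection: for any `t ≤ sd p n` there is `i ≤ n` with digit sum exactly `t`
and no carries in `i + (n - i)`. -/
lemma exists_subdigit {p : ℕ} (hp : 2 ≤ p) :
    ∀ n t, t ≤ sd p n → ∃ i, i ≤ n ∧ sd p i = t ∧ sd p i + sd p (n - i) = sd p n := by
  intro n
  induction n using Nat.strong_induction_on with
  | _ n ih =>
    intro t ht
    rcases Nat.eq_zero_or_pos n with rfl | hn
    · have h0 : t = 0 := by rw [sd_zero] at ht; omega
      subst h0
      exact ⟨0, le_refl _, sd_zero p, by simp [sd_zero]⟩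
    · have hrec := sd_rec hp hn
      have hdm := Nat.div_add_mod n p
      have hdlt : n % p < p := Nat.mod_lt n (by omega)
      set d := n % p with hd
      set m := n / p with hm
      rcases le_or_gt t d with hcase | hcase
      · refine ⟨t, by omega, sd_single hp t (by omega), ?_⟩
        have hnt : n - t = p * m + (d - t) := by omega
        rw [hnt, sd_mul_add hp m (d - t) (by omega), sd_single hp t (by omega)]
        omega
      · have ht' : t - d ≤ sd p m := by omega
        have hmlt : m < n := Nat.div_lt_self hn (by omega)
        obtain ⟨i', hi'le, hi's, hi'sum⟩ := ih m hmlt (t - d) ht'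
        have hple : p * i' ≤ p * m := Nat.mul_le_mul_left p hi'le
        refine ⟨p * i' + d, by omega, ?_, ?_⟩
        · rw [sd_mul_add hp i' d hdlt]; omega
        · have hsub : n - (p * i' + d) = p * (m - i') := by
            rw [Nat.mul_sub]; omega
          rw [hsub, sd_p_mul hp, sd_mul_add hp i' d hdlt]
          omega

lemma dvd_of_sd_dvd {p : ℕ} (hp : 2 ≤ p) {i : ℕ} (h : (p - 1) ∣ sd p i) : (p - 1) ∣ i := by
  have hmod := sd_mod hp i
  have h0 : sd p i ≡ 0 [MOD p - 1] := (Nat.modEq_zero_iff_dvd).mpr h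
  exact (Nat.modEq_zero_iff_dvd).mp (hmod.trans h0)

lemma sd_dvd_of_dvd {p : ℕ} (hp : 2 ≤ p) {i : ℕ} (h : (p - 1) ∣ i) : (p - 1) ∣ sd p i := by
  have hmod := sd_mod hp i
  have h0 : i ≡ 0 [MOD p - 1] := (Nat.modEq_zero_iff_dvd).mpr h
  exact (Nat.modEq_zero_iff_dvd).mp (hmod.symm.trans h0)

lemma even_of_dvd {p i : ℕ} (hp : p.Prime) (hp2 : p ≠ 2) (h : (p - 1) ∣ i) : Even i := by
  have hodd : Odd p := hp.odd_of_ne_two hp2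
  have heven : Even (p - 1) := Nat.Odd.sub_odd hodd odd_one
  have h2 : 2 ∣ i := heven.two_dvd.trans h
  obtain ⟨c, hc⟩ := h2
  exact ⟨c, by omega⟩

/-- The central combinatorial equivalence. -/
lemma key_combin {p : ℕ} (hp : p.Prime) (n : ℕ) :
    (∃ i, 1 ≤ i ∧ i ≤ n ∧ (p - 1) ∣ i ∧ (i = 1 ∨ Even i) ∧ ¬ p ∣ n.choose i)
      ↔ (p ∣ (n + 1) ∨ p ≤ sd p (n + 1)) := by
  have hp2 := hp.two_le
  constructor
  · rintro ⟨i, hi1, hin, hdvd, _, hch⟩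
    by_cases hN : p ∣ (n + 1)
    · exact Or.inl hN
    · right
      have hle := (choose_not_dvd_iff hp hin).mp hch
      have hsne : sd p i ≠ 0 := fun h => by
        rw [sd_eq_zero_iff hp2] at h; omega
      have hsd : (p - 1) ∣ sd p i := sd_dvd_of_dvd hp2 hdvd
      have hsi : p - 1 ≤ sd p i := Nat.le_of_dvd (Nat.pos_of_ne_zero hsne) hsd
      have hsucc := sd_succ_of_not_dvd hp2 hN
      omega
  · rintro (hN | hsd)
    · -- take i = p - 1
      obtain ⟨k, hk⟩ := hN
      have hk1 : 1 ≤ k := by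
        rcases Nat.eq_zero_or_pos k with rfl | h
        · omega
        · exact h
      have hn : n = p * (k - 1) + (p - 1) := by
        have hge : p ≤ p * k := by
          calc p = p * 1 := (Nat.mul_one p).symm
            _ ≤ p * k := Nat.mul_le_mul_left p hk1
        have : p * k = p * (k - 1) + p := by rw [Nat.mul_sub, Nat.mul_one]; omega
        omega
      refine ⟨p - 1, by omega, by omega, dvd_rfl, ?_, ?_⟩
      · by_cases hp2' : p = 2
        · left; omega
        · right; exact even_of_dvd hp hp2' dvd_rfl
      · rw [choose_not_dvd_iff hp (by omega : p - 1 ≤ n)]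
        have h1 : sd p (p - 1) = p - 1 := sd_single hp2 _ (by omega)
        have h2 : n - (p - 1) = p * (k - 1) := by omega
        have h3 : sd p n = sd p (k - 1) + (p - 1) := by rw [hn, sd_mul_add hp2 _ _ (by omega)]
        rw [h1, h2, sd_p_mul hp2, h3]
        omega
    · -- p ∤ n+1 may or may not hold; if p ∣ n+1 use previous case, so wlog ¬ p ∣ n+1
      by_cases hN : p ∣ (n + 1)
      · -- reuse the first construction
        obtain ⟨k, hk⟩ := hN
        have hk1 : 1 ≤ k := by
          rcases Nat.eq_zero_or_pos k with rfl | h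
          · omega
          · exact h
        have hn : n = p * (k - 1) + (p - 1) := by
          have hge : p ≤ p * k := by
            calc p = p * 1 := (Nat.mul_one p).symm
              _ ≤ p * k := Nat.mul_le_mul_left p hk1
          have : p * k = p * (k - 1) + p := by rw [Nat.mul_sub, Nat.mul_one]; omega
          omega
        refine ⟨p - 1, by omega, by omega, dvd_rfl, ?_, ?_⟩
        · by_cases hp2' : p = 2
          · left; omega
          · right; exact even_of_dvd hp hp2' dvd_rfl
        · rw [choose_not_dvd_iff hp (by omega : p - 1 ≤ n)]
          have h1 : sd p (p - 1) = p - 1 := sd_single hp2 _ (by omega)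
          have h2 : n - (p - 1) = p * (k - 1) := by omega
          have h3 : sd p n = sd p (k - 1) + (p - 1) := by rw [hn, sd_mul_add hp2 _ _ (by omega)]
          rw [h1, h2, sd_p_mul hp2, h3]
          omega
      · have hsucc := sd_succ_of_not_dvd hp2 hN
        have ht : p - 1 ≤ sd p n := by omega
        obtain ⟨i, hile, his, hisum⟩ := exists_subdigit hp2 n (p - 1) ht
        have hi1 : 1 ≤ i := by
          rcases Nat.eq_zero_or_pos i with rfl | h
          · rw [sd_zero] at his; omega
          · exact h
        refine ⟨i, hi1, hile, ?_, ?_, ?_⟩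
        · exact dvd_of_sd_dvd hp2 (his ▸ dvd_rfl)
        · by_cases hp2' : p = 2
          · subst hp2'
            rcases Nat.even_or_odd i with he | ho
            · right; exact he
            · left
              have hi2 : i % 2 = 1 := Nat.odd_iff.mp ho
              have := sd_rec (le_refl 2) (show 0 < i by omega)
              have hz : sd 2 (i / 2) = 0 := by omega
              rw [sd_eq_zero_iff (le_refl 2)] at hz
              omega
          · exact Or.inr (even_of_dvd hp hp2' (dvd_of_sd_dvd hp2 (his ▸ dvd_rfl)))
        · rw [choose_not_dvd_iff hp hile]
          omega






lemma bernoulli_odd_eq_zero {m : ℕ} (ho : Odd m) (hm : 1 < m) : bernoulli m = 0 := by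
  rw [bernoulli_eq_bernoulli'_of_ne_one (by omega)]
  exact bernoulli'_eq_zero_of_odd ho hm

lemma padicNorm_pow (p : ℕ) [hf : Fact p.Prime] (q : ℚ) (n : ℕ) :
    padicNorm p (q ^ n) = padicNorm p q ^ n := by
  induction n with
  | zero => simp [padicNorm.one]
  | succ n ih => rw [pow_succ, pow_succ, padicNorm.mul, ih]

lemma lt_pow_pred {p j : ℕ} (hp : 2 ≤ p) (hj : 2 ≤ j) (hx : p ≠ 2 ∨ 3 ≤ j) :
    j < p ^ (j - 1) := by
  rcases hx with hx | hx
  · have hp3 : 3 ≤ p := by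
      rcases Nat.lt_or_ge p 3 with h | h
      · omega
      · exact h
    have key : ∀ j, 2 ≤ j → j < 3 ^ (j - 1) := by
      intro j hj
      induction j with
      | zero => omega
      | succ k ih =>
        rcases Nat.lt_or_ge k 2 with h | h
        · interval_cases k
          · omega
          · norm_num
        · have := ih h
          have h2 : k + 1 - 1 = (k - 1) + 1 := by omega
          rw [h2, pow_succ]
          omega
    exact lt_of_lt_of_le (key j hj) (Nat.pow_le_pow_left hp3 _)
  · have key : ∀ j, 3 ≤ j → j < 2 ^ (j - 1) := by
      intro j hj
      induction j with
      | zero => omega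
      | succ k ih =>
        rcases Nat.lt_or_ge k 3 with h | h
        · interval_cases k
          · omega
          · omega
          · norm_num
        · have := ih h
          have h2 : k + 1 - 1 = (k - 1) + 1 := by omega
          rw [h2, pow_succ]
          omega
    exact lt_of_lt_of_le (key j hx) (Nat.pow_le_pow_left hp _)

lemma padicNorm_nat_lower {p : ℕ} [hf : Fact p.Prime] {j : ℕ} (hj : 2 ≤ j)
    (hx : p ≠ 2 ∨ 3 ≤ j) :
    (p : ℚ) ^ (-((j : ℤ) - 2)) ≤ padicNorm p j := by
  have hp2 := hf.out.two_le
  have hq1 : (1 : ℚ) < p := by exact_mod_cast hp2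
  have hjne : (j : ℚ) ≠ 0 := by positivity
  obtain ⟨z, hz⟩ := padicNorm.values_discrete (p := p) hjne
  have hnd : ¬ ((p : ℤ) ^ (j - 1) ∣ (j : ℤ)) := by
    intro hdvd
    have hlt := lt_pow_pred hp2 hj hx
    have hle : (p : ℤ) ^ (j - 1) ≤ (j : ℤ) := Int.le_of_dvd (by exact_mod_cast (by omega : 0 < j)) hdvd
    exact absurd (by exact_mod_cast hle : p ^ (j - 1) ≤ j) (by omega)
  have hnorm : ¬ (padicNorm p (j : ℚ) ≤ (p:ℚ) ^ (-((j - 1 : ℕ) : ℤ))) := by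
    intro hle
    apply hnd
    have h := (padicNorm.dvd_iff_norm_le (p := p) (n := j - 1) (z := (j:ℤ))).mpr (by
      push_cast
      exact_mod_cast hle)
    exact_mod_cast h
  rw [hz] at hnorm ⊢
  have h1 : ((p:ℚ)) ^ (-((j - 1 : ℕ) : ℤ)) < (p:ℚ) ^ (-z) := lt_of_not_ge hnorm
  have h2 : -((j - 1 : ℕ) : ℤ) < -z := (zpow_lt_zpow_iff_right₀ hq1).mp h1
  have h3 : ((j - 1 : ℕ) : ℤ) = (j : ℤ) - 1 := by omega
  apply (zpow_le_zpow_iff_right₀ hq1).mpr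
  omega

/-- The per-term bound in the Faulhaber sum. -/
lemma term_bound {p : ℕ} [hf : Fact p.Prime] (b : ℚ) (hb : padicNorm p b ≤ p)
    (c j : ℕ) (hj : 2 ≤ j) (hx : p ≠ 2 ∨ 3 ≤ j) :
    padicNorm p (b * c * (p:ℚ) ^ j / j) ≤ (p:ℚ)⁻¹ := by
  have hp2 := hf.out.two_le
  have hq1 : (1 : ℚ) < p := by exact_mod_cast hp2
  have hq0 : (p : ℚ) ≠ 0 := by positivity
  have hD := padicNorm_nat_lower (p := p) hj hx
  have hDpos : 0 < padicNorm p (j:ℚ) := lt_of_lt_of_le (by positivity) hD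
  have hc : padicNorm p (c:ℚ) ≤ 1 := padicNorm.of_nat c
  have hbn : 0 ≤ padicNorm p b := padicNorm.nonneg _
  have hcn : 0 ≤ padicNorm p (c:ℚ) := padicNorm.nonneg _
  have expand : padicNorm p (b * c * (p:ℚ) ^ j / j)
      = padicNorm p b * padicNorm p (c:ℚ) * (padicNorm p (p:ℚ)) ^ j / padicNorm p (j:ℚ) := by
    rw [padicNorm.div, padicNorm.mul, padicNorm.mul, padicNorm_pow]
  rw [expand, padicNorm.padicNorm_p_of_prime]
  have hPp : ((p:ℚ)⁻¹) ^ j = (p:ℚ) ^ (-(j:ℤ)) := by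
    rw [inv_pow, ← zpow_natCast, ← zpow_neg]
  calc padicNorm p b * padicNorm p (c:ℚ) * ((p:ℚ)⁻¹) ^ j / padicNorm p (j:ℚ)
      ≤ (p:ℚ) * 1 * ((p:ℚ)⁻¹) ^ j / ((p:ℚ) ^ (-((j:ℤ) - 2))) := by
        gcongr <;> first | positivity | exact hb | exact hc
    _ = (p:ℚ)⁻¹ := by
        rw [hPp, mul_one]
        rw [div_eq_iff (by positivity : (p:ℚ) ^ (-((j:ℤ)-2)) ≠ 0)]
        rw [show ((p:ℚ)) * (p:ℚ)^(-(j:ℤ)) = (p:ℚ)^(1 + -(j:ℤ)) from by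
          rw [zpow_add₀ hq0, zpow_one]]
        rw [← zpow_neg_one (p:ℚ), ← zpow_add₀ hq0]
        congr 1
        ring

lemma sum_pow_int_mod (p : ℕ) [hf : Fact p.Prime] (m : ℕ) (hm : m ≠ 0) :
    if (p - 1) ∣ m then ((p:ℤ) ∣ (∑ k ∈ range p, (k:ℤ)^m) + 1)
    else ((p:ℤ) ∣ ∑ k ∈ range p, (k:ℤ)^m) := by
  classical
  haveI : NeZero p := ⟨hf.out.pos.ne'⟩
  have hcast : (((∑ k ∈ range p, (k:ℤ)^m : ℤ)) : ZMod p) = ∑ k ∈ range p, ((k : ZMod p))^m := by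
    push_cast
    rfl
  have h1 : ∑ k ∈ range p, ((k : ZMod p))^m = ∑ x : ZMod p, x ^ m := by
    refine Finset.sum_bij (fun k _ => (k : ZMod p)) (fun a _ => mem_univ _) ?_ ?_ (fun a _ => rfl)
    · intro a ha b hb hab
      have ha' := mem_range.mp ha
      have hb' := mem_range.mp hb
      have h := congrArg ZMod.val hab
      rwa [ZMod.val_cast_of_lt ha', ZMod.val_cast_of_lt hb'] at h
    · intro x _
      exact ⟨x.val, mem_range.mpr (ZMod.val_lt x), ZMod.natCast_rightInverse x⟩
  have hu : ∑ x : (ZMod p)ˣ, ((x : ZMod p)) ^ m = if (p - 1) ∣ m then -1 else 0 := by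
    have h := FiniteField.sum_pow_units (ZMod p) m
    rwa [ZMod.card] at h
  have hsplit : ∑ x : ZMod p, x ^ m = ∑ x ∈ (univ : Finset (ZMod p)).erase 0, x ^ m := by
    rw [← Finset.sum_erase_add _ _ (mem_univ (0 : ZMod p)), zero_pow hm, add_zero]
  have hbij : ∑ x ∈ (univ : Finset (ZMod p)).erase 0, x ^ m
      = ∑ x : (ZMod p)ˣ, ((x:ZMod p))^m := by
    refine (Finset.sum_bij (fun (u : (ZMod p)ˣ) _ => ((u : ZMod p))) ?_ ?_ ?_ (fun a _ => rfl)).symm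
    · intro u _; exact mem_erase.mpr ⟨u.ne_zero, mem_univ _⟩
    · intro a _ b _ h; exact Units.ext h
    · intro x hx
      have hx0 : x ≠ 0 := (mem_erase.mp hx).1
      exact ⟨(isUnit_iff_ne_zero.mpr hx0).unit, mem_univ _, (isUnit_iff_ne_zero.mpr hx0).unit_spec⟩
  have hfin : (((∑ k ∈ range p, (k:ℤ)^m : ℤ)) : ZMod p) = if (p - 1) ∣ m then -1 else 0 := by
    rw [hcast, h1, hsplit, hbij, hu]
  split_ifs with hd
  · have h0 : ((∑ k ∈ range p, (k:ℤ)^m + 1 : ℤ) : ZMod p) = 0 := by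
      rw [Int.cast_add, hfin, if_pos hd]
      simp
    exact (ZMod.intCast_zmod_eq_zero_iff_dvd _ p).mp h0
  · rw [← ZMod.intCast_zmod_eq_zero_iff_dvd]
    rw [hfin, if_neg hd]

lemma sum_pow_cast (p m : ℕ) :
    ((∑ k ∈ range p, (k:ℤ)^m : ℤ) : ℚ) = ∑ k ∈ range p, (k:ℚ)^m := by
  push_cast
  rfl

lemma sum_pow_norm_dvd (p : ℕ) [hf : Fact p.Prime] (m : ℕ) (hm : m ≠ 0) (hd : (p - 1) ∣ m) :
    padicNorm p ((∑ k ∈ range p, (k:ℚ)^m) + 1) ≤ (p:ℚ)⁻¹ := by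
  have h := sum_pow_int_mod p m hm
  rw [if_pos hd] at h
  have h2 : (p ^ 1 : ℤ) ∣ (∑ k ∈ range p, (k:ℤ)^m) + 1 := by simpa using h
  have h3 := (padicNorm.dvd_iff_norm_le (p := p) (n := 1)).mp h2
  rw [show (((∑ k ∈ range p, (k:ℤ)^m) + 1 : ℤ) : ℚ) = (∑ k ∈ range p, (k:ℚ)^m) + 1 from by
    push_cast; rfl] at h3
  simpa [zpow_neg_one] using h3

lemma sum_pow_norm_not_dvd (p : ℕ) [hf : Fact p.Prime] (m : ℕ) (hm : m ≠ 0) (hd : ¬ (p - 1) ∣ m) :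
    padicNorm p (∑ k ∈ range p, (k:ℚ)^m) ≤ (p:ℚ)⁻¹ := by
  have h := sum_pow_int_mod p m hm
  rw [if_neg hd] at h
  have h2 : (p ^ 1 : ℤ) ∣ (∑ k ∈ range p, (k:ℤ)^m) := by simpa using h
  have h3 := (padicNorm.dvd_iff_norm_le (p := p) (n := 1)).mp h2
  rw [sum_pow_cast] at h3
  simpa [zpow_neg_one] using h3

lemma sum_pow_norm_le_one (p : ℕ) [hf : Fact p.Prime] (m : ℕ) :
    padicNorm p (∑ k ∈ range p, (k:ℚ)^m) ≤ 1 := by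
  rw [show (∑ k ∈ range p, (k:ℚ)^m) = ((∑ k ∈ range p, k^m : ℕ) : ℚ) from by push_cast; rfl]
  exact padicNorm.of_nat _

/-- Main induction: `‖B_m‖_p ≤ p`, and the von Staudt–Clausen congruence
`‖p B_m - S_m(p)‖_p ≤ 1/p` for `m = 1` or `m` even positive. -/
theorem bernoulli_main (p : ℕ) [hf : Fact p.Prime] : ∀ m : ℕ,
    padicNorm p (bernoulli m) ≤ p ∧
    ((m = 1 ∨ (Even m ∧ m ≠ 0)) →
      padicNorm p ((p:ℚ) * bernoulli m - ∑ k ∈ range p, (k:ℚ)^m) ≤ (p:ℚ)⁻¹) := by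
  intro m
  induction m using Nat.strong_induction_on with
  | _ m ih =>
    have hp2 := hf.out.two_le
    have hq1 : (1:ℚ) < p := by exact_mod_cast hp2
    have hq0 : (p:ℚ) ≠ 0 := by positivity
    have hcong : (m = 1 ∨ (Even m ∧ m ≠ 0)) →
        padicNorm p ((p:ℚ) * bernoulli m - ∑ k ∈ range p, (k:ℚ)^m) ≤ (p:ℚ)⁻¹ := by
      intro hm
      have hm1 : 1 ≤ m := by
        rcases hm with h | h
        · omega
        · exact Nat.pos_of_ne_zero h.2
      have hF := sum_range_pow p m
      rw [Finset.sum_range_succ] at hF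
      have hlast : bernoulli m * (((m+1).choose m : ℕ) : ℚ) * (p:ℚ)^(m+1-m)/((m:ℚ)+1)
          = (p:ℚ) * bernoulli m := by
        rw [Nat.choose_succ_self_right, show m + 1 - m = 1 from by omega, pow_one]
        have hne : ((m:ℚ)+1) ≠ 0 := by positivity
        push_cast
        field_simp
      rw [hlast] at hF
      have hEq : (p:ℚ) * bernoulli m - ∑ k ∈ range p, (k:ℚ)^m
          = - ∑ i ∈ range m, bernoulli i * (((m+1).choose i : ℕ) : ℚ) * (p:ℚ)^(m+1-i)/((m:ℚ)+1) := by
        rw [hF]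
        ring
      rw [hEq, padicNorm.neg]
      refine padicNorm.sum_le (nonempty_range_iff.mpr (by omega)) ?_
      intro i hi
      have him : i < m := mem_range.mp hi
      have hj2 : 2 ≤ m + 1 - i := by omega
      have hterm : bernoulli i * (((m+1).choose i : ℕ) : ℚ) * (p:ℚ)^(m+1-i)/((m:ℚ)+1)
          = bernoulli i * ((m.choose i : ℕ) : ℚ) * (p:ℚ)^(m+1-i) / ((m+1-i : ℕ) : ℚ) := by
        have hnat : m.choose i * (m+1) = (m+1).choose i * (m+1-i) := Nat.choose_mul_succ_eq m i
        have hne1 : ((m:ℚ)+1) ≠ 0 := by positivity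
        have hne2 : ((m+1-i : ℕ) : ℚ) ≠ 0 := by
          have : 0 < m + 1 - i := by omega
          positivity
        rw [div_eq_div_iff hne1 hne2]
        have hc : ((m.choose i : ℕ) : ℚ) * ((m:ℚ)+1) = (((m+1).choose i : ℕ) : ℚ) * ((m+1-i : ℕ) : ℚ) := by
          exact_mod_cast congrArg (Nat.cast : ℕ → ℚ) hnat
        linear_combination (-(bernoulli i * (p:ℚ)^(m+1-i))) * hc
      rw [hterm]
      by_cases hx : p ≠ 2 ∨ 3 ≤ m + 1 - i
      · exact term_bound (bernoulli i) (ih i him).1 (m.choose i) (m+1-i) hj2 hx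
      · push_neg at hx
        obtain ⟨hpe, hje⟩ := hx
        have hje' : m + 1 - i = 2 := by omega
        have hie : i = m - 1 := by omega
        subst hpe
        rcases hm with hm1' | hmev
        · have hi0 : i = 0 := by omega
          subst hi0
          subst hm1'
          have heq : bernoulli 0 * ((Nat.choose 1 0 : ℕ) : ℚ) * ((2:ℕ):ℚ) ^ (1+1-0) / (((1+1-0:ℕ)):ℚ) = ((2:ℕ):ℚ) := by
            norm_num
          rw [heq, padicNorm.padicNorm_p_of_prime]
        · have hch : m.choose i = m := by
            have h1 : m.choose (m - 1) = m.choose 1 := by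
              rw [← Nat.choose_symm (by omega : 1 ≤ m)]
            rw [hie, h1, Nat.choose_one_right]
          rw [hje', hch]
          push_cast
          have hBn : padicNorm 2 (bernoulli i) ≤ (2:ℚ) := by
            have h := (ih i him).1
            simpa using h
          have hmn : padicNorm 2 ((m:ℚ)) ≤ (2:ℚ)⁻¹ := by
            have h2 : ((2 ^ 1 : ℕ) : ℤ) ∣ (m : ℤ) := by
              obtain ⟨c, hc⟩ := hmev.1
              exact ⟨c, by push_cast; omega⟩
            have h3 := (padicNorm.dvd_iff_norm_le (p := 2) (n := 1)).mp h2
            have hcast2 : ((m:ℤ):ℚ) = (m:ℚ) := by push_cast; rfl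
            rw [hcast2] at h3
            calc padicNorm 2 (m:ℚ) ≤ ((2:ℕ):ℚ)^(-((1:ℕ)):ℤ) := h3
              _ = (2:ℚ)⁻¹ := by norm_num
          have h2norm : padicNorm 2 (2:ℚ) = (2:ℚ)⁻¹ := by
            simpa using padicNorm.padicNorm_p_of_prime (p := 2)
          have expand : padicNorm 2 (bernoulli i * (m:ℚ) * (2:ℚ) ^ 2 / (2:ℚ))
              = padicNorm 2 (bernoulli i) * padicNorm 2 (m:ℚ)
                * (padicNorm 2 (2:ℚ))^2 / padicNorm 2 (2:ℚ) := by
            rw [padicNorm.div, padicNorm.mul, padicNorm.mul, padicNorm_pow]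
          rw [expand, h2norm]
          have hb0 : 0 ≤ padicNorm 2 (bernoulli i) := padicNorm.nonneg _
          have hm0 : 0 ≤ padicNorm 2 (m:ℚ) := padicNorm.nonneg _
          calc padicNorm 2 (bernoulli i) * padicNorm 2 (m:ℚ) * ((2:ℚ)⁻¹)^2 / (2:ℚ)⁻¹
              ≤ 2 * (2:ℚ)⁻¹ * ((2:ℚ)⁻¹)^2 / (2:ℚ)⁻¹ := by gcongr <;> norm_num
            _ = (2:ℚ)⁻¹ := by norm_num
    refine ⟨?_, hcong⟩
    by_cases hm : m = 1 ∨ (Even m ∧ m ≠ 0)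
    · have h1 := hcong hm
      have hm1 : 1 ≤ m := by
        rcases hm with h | h
        · omega
        · exact Nat.pos_of_ne_zero h.2
      have hS : padicNorm p (∑ k ∈ range p, (k:ℚ)^m) ≤ 1 := sum_pow_norm_le_one p m
      have hpB : padicNorm p ((p:ℚ) * bernoulli m) ≤ 1 := by
        have hsum := padicNorm.nonarchimedean (p := p)
          (q := (p:ℚ) * bernoulli m - ∑ k ∈ range p, (k:ℚ)^m) (r := ∑ k ∈ range p, (k:ℚ)^m)
        rw [sub_add_cancel] at hsum
        refine le_trans hsum (max_le (le_trans h1 ?_) hS)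
        rw [inv_le_one_iff₀]
        right
        linarith
      rw [padicNorm.mul, padicNorm.padicNorm_p_of_prime] at hpB
      have hppos : (0:ℚ) < p := by linarith
      calc padicNorm p (bernoulli m) = (p:ℚ) * ((p:ℚ)⁻¹ * padicNorm p (bernoulli m)) := by
            field_simp
        _ ≤ (p:ℚ) * 1 := by
            apply mul_le_mul_of_nonneg_left hpB (le_of_lt hppos)
        _ = p := mul_one _
    · push_neg at hm
      obtain ⟨hm1, hm2⟩ := hm
      rcases Nat.eq_zero_or_pos m with rfl | hmpos
      · rw [bernoulli_zero, padicNorm.one]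
        linarith
      · have hodd : Odd m := by
          rcases Nat.even_or_odd m with he | ho
          · have := hm2 he; omega
          · exact ho
        have hmgt : 1 < m := by omega
        rw [bernoulli_odd_eq_zero hodd hmgt, padicNorm.zero]
        linarith


open Finset



/-- `p^(k+1) ∣ q.den ↔ p^k < ‖q‖_p`. -/
lemma pow_dvd_den_iff {p : ℕ} [hf : Fact p.Prime] (q : ℚ) (k : ℕ) :
    p ^ (k+1) ∣ q.den ↔ (p:ℚ)^(k:ℤ) < padicNorm p q := by
  have hp2 := hf.out.two_le
  have hq1 : (1:ℚ) < p := by exact_mod_cast hp2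
  rcases eq_or_ne q 0 with rfl | hq
  · constructor
    · intro h
      rw [Rat.den_zero] at h
      have h1 := Nat.le_of_dvd one_pos h
      have h2 : 2 ≤ p ^ (k+1) := by
        calc 2 = 2^1 := by norm_num
          _ ≤ 2^(k+1) := Nat.pow_le_pow_right (by norm_num) (by omega)
          _ ≤ p^(k+1) := Nat.pow_le_pow_left hp2 _
      omega
    · intro h
      rw [padicNorm.zero] at h
      have hpos : (0:ℚ) < (p:ℚ)^(k:ℤ) := by positivity
      linarith
  · rw [padicNorm.eq_zpow_of_nonzero hq, padicValRat_def]
    by_cases hden : p ∣ q.den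
    · have hnum : ¬ (p:ℤ) ∣ q.num := by
        intro hdvd
        have h1 : p ∣ q.num.natAbs := Int.ofNat_dvd_left.mp hdvd
        have h2 : p ∣ Nat.gcd q.num.natAbs q.den := Nat.dvd_gcd h1 hden
        rw [q.reduced] at h2
        have := Nat.le_of_dvd one_pos h2
        omega
      have hdvd_iff : p ^ (k+1) ∣ q.den ↔ (k+1 : ℕ) ≤ padicValNat p q.den := by
        rw [padicValNat_dvd_iff]
        constructor
        · rintro (h | h)
          · exact absurd h q.den_nz
          · exact h
        · exact Or.inr
      rw [padicValInt.eq_zero_of_not_dvd hnum, hdvd_iff, zpow_lt_zpow_iff_right₀ hq1]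
      omega
    · rw [padicValNat.eq_zero_of_not_dvd hden, zpow_lt_zpow_iff_right₀ hq1]
      constructor
      · intro h
        exact absurd (dvd_trans (dvd_pow_self p (by omega : k+1 ≠ 0)) h) hden
      · intro h
        exfalso
        omega

lemma dvd_den_iff {p : ℕ} [hf : Fact p.Prime] (q : ℚ) :
    p ∣ q.den ↔ 1 < padicNorm p q := by
  have h := pow_dvd_den_iff (p := p) q 0
  simpa using h

lemma bernoulli_norm_eq_p (p : ℕ) [hf : Fact p.Prime] (m : ℕ)
    (hm1 : 1 ≤ m) (hm2 : m = 1 ∨ Even m) (hd : (p - 1) ∣ m) :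
    padicNorm p (bernoulli m) = p := by
  have hp2 := hf.out.two_le
  have hq1 : (1:ℚ) < p := by exact_mod_cast hp2
  have hq0 : (p:ℚ) ≠ 0 := by positivity
  have hm' : m = 1 ∨ (Even m ∧ m ≠ 0) := by
    rcases hm2 with h | h
    · exact Or.inl h
    · exact Or.inr ⟨h, by omega⟩
  have hcong := (bernoulli_main p m).2 hm'
  have hS := sum_pow_norm_dvd p m (by omega) hd
  have h1 : padicNorm p ((p:ℚ) * bernoulli m + 1) ≤ (p:ℚ)⁻¹ := by
    have hna := padicNorm.nonarchimedean (p := p)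
      (q := (p:ℚ) * bernoulli m - ∑ k ∈ range p, (k:ℚ)^m)
      (r := (∑ k ∈ range p, (k:ℚ)^m) + 1)
    rw [show ((p:ℚ)*bernoulli m - ∑ k ∈ range p, (k:ℚ)^m) + ((∑ k ∈ range p, (k:ℚ)^m) + 1)
        = (p:ℚ)*bernoulli m + 1 from by ring] at hna
    exact le_trans hna (max_le hcong hS)
  have hinv1 : (p:ℚ)⁻¹ < 1 := by
    rw [inv_lt_one_iff₀]
    right; exact hq1
  have hne : padicNorm p ((p:ℚ)*bernoulli m + 1) ≠ padicNorm p (-1) := by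
    rw [padicNorm.neg, padicNorm.one]
    intro h
    rw [h] at h1
    linarith
  have h2 : padicNorm p ((p:ℚ)*bernoulli m) = 1 := by
    have hmax := padicNorm.add_eq_max_of_ne (p := p) hne
    rw [show ((p:ℚ)*bernoulli m + 1) + (-1) = (p:ℚ)*bernoulli m from by ring] at hmax
    rw [hmax, padicNorm.neg, padicNorm.one]
    exact max_eq_right (le_trans h1 (le_of_lt hinv1))
  rw [padicNorm.mul, padicNorm.padicNorm_p_of_prime] at h2
  have : padicNorm p (bernoulli m) = (p:ℚ) * ((p:ℚ)⁻¹ * padicNorm p (bernoulli m)) := by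
    field_simp
  rw [this, h2, mul_one]

lemma bernoulli_norm_le_one (p : ℕ) [hf : Fact p.Prime] (m : ℕ)
    (h : ¬ (1 ≤ m ∧ (m = 1 ∨ Even m) ∧ (p - 1) ∣ m)) :
    padicNorm p (bernoulli m) ≤ 1 := by
  have hp2 := hf.out.two_le
  have hq1 : (1:ℚ) < p := by exact_mod_cast hp2
  have hq0 : (p:ℚ) ≠ 0 := by positivity
  rcases Nat.eq_zero_or_pos m with rfl | hm1
  · rw [bernoulli_zero, padicNorm.one]
  by_cases hm2 : m = 1 ∨ Even m
  · -- then necessarily ¬ (p-1) ∣ m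
    have hd : ¬ (p - 1) ∣ m := fun hd => h ⟨hm1, hm2, hd⟩
    have hm' : m = 1 ∨ (Even m ∧ m ≠ 0) := by
      rcases hm2 with h' | h'
      · exact Or.inl h'
      · exact Or.inr ⟨h', by omega⟩
    have hcong := (bernoulli_main p m).2 hm'
    have hS := sum_pow_norm_not_dvd p m (by omega) hd
    have hpB : padicNorm p ((p:ℚ) * bernoulli m) ≤ (p:ℚ)⁻¹ := by
      have hna := padicNorm.nonarchimedean (p := p)
        (q := (p:ℚ) * bernoulli m - ∑ k ∈ range p, (k:ℚ)^m)
        (r := ∑ k ∈ range p, (k:ℚ)^m)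
      rw [sub_add_cancel] at hna
      exact le_trans hna (max_le hcong hS)
    rw [padicNorm.mul, padicNorm.padicNorm_p_of_prime] at hpB
    have hppos : (0:ℚ) < p := by linarith
    have := mul_le_mul_of_nonneg_left hpB (le_of_lt hppos)
    rw [show (p:ℚ) * ((p:ℚ)⁻¹ * padicNorm p (bernoulli m)) = padicNorm p (bernoulli m) from by
      field_simp] at this
    rw [show (p:ℚ) * (p:ℚ)⁻¹ = 1 from by field_simp] at this
    exact this
  · push_neg at hm2
    obtain ⟨hne1, hnev⟩ := hm2
    have hodd : Odd m := Nat.odd_iff.mpr (by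
      rcases Nat.even_or_odd m with he | ho
      · exact absurd he hnev
      · exact Nat.odd_iff.mp ho)
    rw [bernoulli_odd_eq_zero hodd (by omega), padicNorm.zero]
    linarith

/-- characterization of `p ∣ den (B_b * c)` for the coefficients. -/
lemma coeff_den_dvd_iff {p : ℕ} [hf : Fact p.Prime] (b c : ℕ) (hc : c ≠ 0) :
    (p ∣ (bernoulli b * (c:ℚ)).den
      ↔ (1 ≤ b ∧ (b = 1 ∨ Even b) ∧ (p - 1) ∣ b ∧ ¬ p ∣ c))
    ∧ ¬ p ^ 2 ∣ (bernoulli b * (c:ℚ)).den := by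
  have hp2 := hf.out.two_le
  have hq1 : (1:ℚ) < p := by exact_mod_cast hp2
  have hBle : padicNorm p (bernoulli b) ≤ p := (bernoulli_main p b).1
  have hCle : padicNorm p (c:ℚ) ≤ 1 := padicNorm.of_nat c
  have hB0 : 0 ≤ padicNorm p (bernoulli b) := padicNorm.nonneg _
  have hC0 : 0 ≤ padicNorm p (c:ℚ) := padicNorm.nonneg _
  have hmul : padicNorm p (bernoulli b * (c:ℚ))
      = padicNorm p (bernoulli b) * padicNorm p (c:ℚ) := padicNorm.mul _ _
  constructor
  · rw [dvd_den_iff, hmul]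
    constructor
    · intro hlt
      by_cases hcase : 1 ≤ b ∧ (b = 1 ∨ Even b) ∧ (p - 1) ∣ b
      · refine ⟨hcase.1, hcase.2.1, hcase.2.2, ?_⟩
        intro hdvd
        have hCsmall : padicNorm p (c:ℚ) ≤ (p:ℚ)⁻¹ := by
          have h2 : ((p ^ 1 : ℕ) : ℤ) ∣ (c : ℤ) := by
            obtain ⟨e, he⟩ := hdvd
            exact ⟨e, by push_cast [he]; ring⟩
          have h3 := (padicNorm.dvd_iff_norm_le (p := p) (n := 1)).mp h2
          rw [show ((c:ℤ):ℚ) = (c:ℚ) from by push_cast; rfl] at h3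
          calc padicNorm p (c:ℚ) ≤ ((p:ℕ):ℚ)^(-((1:ℕ)):ℤ) := h3
            _ = (p:ℚ)⁻¹ := by
              push_cast
              rw [zpow_neg_one]
        have : padicNorm p (bernoulli b) * padicNorm p (c:ℚ) ≤ (p:ℚ) * (p:ℚ)⁻¹ := by
          apply mul_le_mul hBle hCsmall hC0 (by linarith)
        rw [show (p:ℚ) * (p:ℚ)⁻¹ = 1 from by field_simp] at this
        linarith
      · exfalso
        have hBsmall := bernoulli_norm_le_one p b (by tauto)
        have : padicNorm p (bernoulli b) * padicNorm p (c:ℚ) ≤ 1 * 1 :=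
          mul_le_mul hBsmall hCle hC0 (by norm_num)
        linarith
    · rintro ⟨hb1, hb2, hbd, hcd⟩
      rw [bernoulli_norm_eq_p p b hb1 hb2 hbd, (padicNorm.nat_eq_one_iff c).mpr hcd, mul_one]
      exact hq1
  · rw [show (2:ℕ) = 1 + 1 from rfl, pow_dvd_den_iff]
    intro hlt
    have : padicNorm p (bernoulli b * (c:ℚ)) ≤ (p:ℚ) * 1 := by
      rw [hmul]
      exact mul_le_mul hBle hCle hC0 (by linarith)
    rw [mul_one] at this
    have hzp : (p:ℚ)^((1:ℕ):ℤ) = (p:ℚ) := by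
      norm_num
    rw [hzp] at hlt
    linarith


open Finset


lemma prime_dvd_lcm_iff {f : ℕ → ℕ} {p : ℕ} (hp : p.Prime) (s : Finset ℕ) :
    p ∣ s.lcm f ↔ ∃ k ∈ s, p ∣ f k := by
  classical
  induction s using Finset.induction_on with
  | empty =>
    simp only [Finset.lcm_empty]
    constructor
    · intro h
      have h1 := Nat.le_of_dvd one_pos h
      have h2 := hp.two_le
      omega
    · rintro ⟨k, hk, -⟩
      exact absurd hk (notMem_empty k)
  | @insert a s ha ih =>
    rw [Finset.lcm_insert]
    constructor
    · intro h
      have hdvd : p ∣ f a * s.lcm f :=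
        h.trans (lcm_dvd (dvd_mul_right _ _) (dvd_mul_left _ _))
      rcases (Nat.Prime.dvd_mul hp).mp hdvd with h1 | h1
      · exact ⟨a, mem_insert_self a s, h1⟩
      · obtain ⟨k, hk, hkd⟩ := ih.mp h1
        exact ⟨k, mem_insert_of_mem hk, hkd⟩
    · rintro ⟨k, hk, hkd⟩
      rcases mem_insert.mp hk with rfl | hk'
      · exact hkd.trans (dvd_lcm_left _ _)
      · exact (hkd.trans (Finset.dvd_lcm hk')).trans (dvd_lcm_right _ _)

lemma sq_not_dvd_lcm {f : ℕ → ℕ} {p : ℕ} (hp : p.Prime) :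
    ∀ s : Finset ℕ, (∀ k ∈ s, f k ≠ 0) → (∀ k ∈ s, ¬ p^2 ∣ f k) → ¬ p^2 ∣ s.lcm f := by
  classical
  intro s
  induction s using Finset.induction_on with
  | empty =>
    intro _ _
    simp only [Finset.lcm_empty]
    intro hd
    have h1 := Nat.le_of_dvd one_pos hd
    have h2 := hp.two_le
    nlinarith
  | @insert a s ha ih =>
    intro hf h
    rw [Finset.lcm_insert]
    intro hd
    have ha0 : f a ≠ 0 := hf a (mem_insert_self a s)
    have hs0 : s.lcm f ≠ 0 := by
      intro h0
      rw [Finset.lcm_eq_zero_iff] at h0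
      obtain ⟨k, hk, hk0⟩ := h0
      exact hf k (mem_insert_of_mem (Finset.mem_coe.mp hk)) hk0
    rw [lcm_eq_nat_lcm] at hd
    have hlcm0 : Nat.lcm (f a) (s.lcm f) ≠ 0 := Nat.lcm_ne_zero ha0 hs0
    have hle := (hp.pow_dvd_iff_le_factorization hlcm0).mp hd
    rw [Nat.factorization_lcm ha0 hs0, Finsupp.sup_apply] at hle
    rcases le_sup_iff.mp hle with h1 | h1
    · exact h a (mem_insert_self a s) ((hp.pow_dvd_iff_le_factorization ha0).mpr h1)
    · exact ih (fun k hk => hf k (mem_insert_of_mem hk))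
        (fun k hk => h k (mem_insert_of_mem hk))
        ((hp.pow_dvd_iff_le_factorization hs0).mpr h1)

lemma prod_primes_factorization (T : Finset ℕ) (hT : ∀ q ∈ T, Nat.Prime q) (r : ℕ) :
    (∏ q ∈ T, q).factorization r = if r ∈ T then 1 else 0 := by
  classical
  rw [show (∏ q ∈ T, q) = ∏ q ∈ T, (fun q => q) q from rfl]
  rw [Nat.factorization_prod (fun q hq => (hT q hq).ne_zero)]
  rw [Finset.sum_apply']
  rw [Finset.sum_congr rfl (fun q hq => by
    rw [(hT q hq).factorization, Finsupp.single_apply])]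
  exact Finset.sum_ite_eq' T r (fun _ => 1)



end KS

/-- For `n ≥ 1`, `DB n = D̂_{n+1} · D̃_{n+1} · Ď_{n+1}`. -/
theorem stmt_2 (n : ℕ) (hn : 1 ≤ n) :
    DB n = Dhat (n + 1) * Dtilde (n + 1) * Dcheck (n + 1) := by
  classical
  set dfun : ℕ → ℕ := fun k => (bernoulli (n - k) * ((n.choose k : ℕ) : ℚ)).den with hdfun
  have hDB : DB n = (Finset.range (n+1)).lcm dfun := by
    unfold DB
    rw [KS.polyDenom_eq_lcm _ (Finset.range (n+1)) (KS.bernoulli_support n)]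
    refine Finset.lcm_congr rfl (fun k hk => ?_)
    rw [KS.bernoulli_coeff n k, if_pos (Nat.lt_succ_iff.mp (Finset.mem_range.mp hk))]
  set L := (Finset.range (n+1)).lcm dfun with hLdef
  have hdf0 : ∀ k ∈ Finset.range (n+1), dfun k ≠ 0 := fun k _ => Rat.den_nz _
  have hL0 : L ≠ 0 := by
    intro h
    rw [hLdef, Finset.lcm_eq_zero_iff] at h
    obtain ⟨k, hk, hk0⟩ := h
    exact hdf0 k (Finset.mem_coe.mp hk) hk0
  set A := (Finset.range (n+1+1)).filter
    (fun p => p.Prime ∧ ¬ p ∣ (n+1) ∧ p ≤ sd p (n+1)) with hA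
  set B := (Finset.range (n+1+1)).filter
    (fun p => p.Prime ∧ p ∣ (n+1) ∧ p ≤ sd p (n+1)) with hB
  set C := (Finset.range (n+1+1)).filter
    (fun p => p.Prime ∧ p ∣ (n+1) ∧ sd p (n+1) < p) with hC
  set T := (Finset.range (n+1+1)).filter
    (fun p => p.Prime ∧ (p ∣ (n+1) ∨ p ≤ sd p (n+1))) with hT
  have hAB : Disjoint A B := by
    rw [Finset.disjoint_left]
    intro p hp1 hp2
    rw [hA, Finset.mem_filter] at hp1
    rw [hB, Finset.mem_filter] at hp2
    exact hp1.2.2.1 hp2.2.2.1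
  have hABC : Disjoint (A ∪ B) C := by
    rw [Finset.disjoint_left]
    intro p hp1 hp2
    rw [Finset.mem_union] at hp1
    rw [hC, Finset.mem_filter] at hp2
    rcases hp1 with h | h
    · rw [hA, Finset.mem_filter] at h
      exact h.2.2.1 hp2.2.2.1
    · rw [hB, Finset.mem_filter] at h
      have h1 := h.2.2.2
      have h2 := hp2.2.2.2
      omega
  have hTeq : (A ∪ B) ∪ C = T := by
    ext q
    rw [hA, hB, hC, hT]
    simp only [Finset.mem_union, Finset.mem_filter, Finset.mem_range]
    constructor
    · rintro ((⟨hq, hpr, hnd, hle⟩ | ⟨hq, hpr, hd, hle⟩) | ⟨hq, hpr, hd, hlt⟩)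
      · exact ⟨hq, hpr, Or.inr hle⟩
      · exact ⟨hq, hpr, Or.inl hd⟩
      · exact ⟨hq, hpr, Or.inl hd⟩
    · rintro ⟨hq, hpr, hd | hle⟩
      · by_cases hsd : q ≤ sd q (n+1)
        · exact Or.inl (Or.inr ⟨hq, hpr, hd, hsd⟩)
        · exact Or.inr ⟨hq, hpr, hd, by omega⟩
      · by_cases hdv : q ∣ (n+1)
        · exact Or.inl (Or.inr ⟨hq, hpr, hdv, hle⟩)
        · exact Or.inl (Or.inl ⟨hq, hpr, hdv, hle⟩)
  have hRHS : Dhat (n + 1) * Dtilde (n + 1) * Dcheck (n + 1) = ∏ q ∈ T, q := by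
    unfold Dhat Dtilde Dcheck
    rw [← hA, ← hB, ← hC, ← Finset.prod_union hAB, ← Finset.prod_union hABC, hTeq]
  have hTprime : ∀ q ∈ T, q.Prime := by
    intro q hq
    rw [hT, Finset.mem_filter] at hq
    exact hq.2.1
  have hR0 : (∏ q ∈ T, q) ≠ 0 := by
    rw [Finset.prod_ne_zero_iff]
    exact fun q hq => (hTprime q hq).ne_zero
  rw [hDB, hRHS]
  apply Nat.eq_of_factorization_eq hL0 hR0
  intro r
  by_cases hr : r.Prime
  · haveI : Fact r.Prime := ⟨hr⟩
    have hnotsq : ¬ r^2 ∣ L :=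
      KS.sq_not_dvd_lcm hr (Finset.range (n+1)) hdf0
        (fun k hk => (KS.coeff_den_dvd_iff (p := r) (n-k) (n.choose k)
          (Nat.choose_pos (Nat.lt_succ_iff.mp (Finset.mem_range.mp hk))).ne').2)
    have hmain : r ∣ L ↔ r ∈ T := by
      rw [hLdef, KS.prime_dvd_lcm_iff hr]
      have hiff : (∃ k ∈ Finset.range (n+1), r ∣ dfun k) ↔
          (∃ i, 1 ≤ i ∧ i ≤ n ∧ (r-1) ∣ i ∧ (i = 1 ∨ Even i) ∧ ¬ r ∣ n.choose i) := by
        constructor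
        · rintro ⟨k, hk, hdvd⟩
          have hkn : k ≤ n := Nat.lt_succ_iff.mp (Finset.mem_range.mp hk)
          have hc0 : n.choose k ≠ 0 := (Nat.choose_pos hkn).ne'
          have hchar := (KS.coeff_den_dvd_iff (p := r) (n-k) (n.choose k) hc0).1.mp hdvd
          obtain ⟨h1, h2, h3, h4⟩ := hchar
          refine ⟨n - k, h1, by omega, h3, h2, ?_⟩
          rwa [Nat.choose_symm hkn]
        · rintro ⟨i, hi1, hin, hd, hpar, hch⟩
          refine ⟨n - i, Finset.mem_range.mpr (by omega), ?_⟩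
          apply (KS.coeff_den_dvd_iff (p := r) (n-(n-i)) (n.choose (n-i))
            ((Nat.choose_pos (by omega : n - i ≤ n)).ne')).1.mpr
          have hni : n - (n - i) = i := by omega
          rw [hni, Nat.choose_symm hin]
          exact ⟨hi1, hpar, hd, hch⟩
      rw [hiff, KS.key_combin hr n, hT]
      simp only [Finset.mem_filter, Finset.mem_range]
      constructor
      · intro h
        refine ⟨?_, hr, h⟩
        rcases h with h | h
        · have := Nat.le_of_dvd (by omega) h
          omega
        · have := KS.sd_le r (n+1)
          omega
      · tauto
    have hLfact : L.factorization r = if r ∣ L then 1 else 0 := by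
      split_ifs with hdvd
      · have h1 : 1 ≤ L.factorization r := (hr.dvd_iff_one_le_factorization hL0).mp hdvd
        have h2 : L.factorization r ≤ 1 := by
          by_contra hgt
          exact hnotsq ((hr.pow_dvd_iff_le_factorization hL0).mpr (by omega))
        omega
      · exact Nat.factorization_eq_zero_of_not_dvd hdvd
    rw [hLfact, KS.prod_primes_factorization T hTprime r]
    simp only [hmain]
  · rw [Nat.factorization_eq_zero_of_not_prime _ hr, Nat.factorization_eq_zero_of_not_prime _ hr]
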